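/- Let X be a real Banach space, let A, B : X →L[ℝ] X be bounded linear operators that commute (A ∘ B = B ∘ A), and let τ > 0. Then τ·φ₁(τ·(A+B)) − τ·φ₁(τ·A) ∘ φ₁(τ·B) = (1/τ) · ∫_{s∈[0,τ]} ∫_{σ∈[0,τ]} ∫_{ξ∈[s,σ]} exp((τ−s)·B) ∘ exp((τ−ξ)·A) ∘ A dξ dσ ds, where the inner integral over ξ from s to σ is an oriented (interval) integral. -/

import Mathlib

set_option maxHeartbeats 1000000
set_option synthInstance.maxHeartbeats 1000000
open MeasureTheory intervalIntegral
open scoped Nat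

/-- The operator `φ_ℓ(T) = ∑_{k=0}^∞ T^k / (ℓ+k)!` (for `ℓ = 0` this is `exp T`). -/
noncomputable def phi {X : Type*} [NormedAddCommGroup X] [NormedSpace ℝ X] [CompleteSpace X]
    (ℓ : ℕ) (T : X →L[ℝ] X) : X →L[ℝ] X :=
  ∑' k : ℕ, (((ℓ + k)! : ℝ)⁻¹) • T ^ k

section Aux
variable {X : Type*} [NormedAddCommGroup X] [NormedSpace ℝ X] [CompleteSpace X]

lemma stmt14_exp_cont (T : X →L[ℝ] X) :
    Continuous fun u : ℝ => NormedSpace.exp (u • T) :=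
  (continuous_iff_continuousAt.2 fun x => (NormedSpace.exp_analytic (𝕂 := ℝ) x).continuousAt).comp
    (continuous_id.smul continuous_const)

lemma stmt14_norm_pow_le (T : X →L[ℝ] X) (k : ℕ) : ‖T ^ k‖ ≤ ‖T‖ ^ k := by
  induction k with
  | zero => simpa [ContinuousLinearMap.one_def] using ContinuousLinearMap.norm_id_le
  | succ n ih =>
    rw [pow_succ, pow_succ]
    exact le_trans (norm_mul_le _ _) (mul_le_mul_of_nonneg_right ih (norm_nonneg _))

lemma stmt14_integral_exp (T : X →L[ℝ] X) (τ : ℝ) :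
    (∫ u in (0:ℝ)..τ, NormedSpace.exp (u • T)) = τ • phi 1 (τ • T) := by
  set g : ℕ → ℝ → (X →L[ℝ] X) :=
    fun k z => (z ^ (k + 1) * (((1 + k)! : ℝ))⁻¹) • T ^ k with hgdef
  have eq_fun : ∀ z : ℝ, z • phi 1 (z • T) = ∑' k : ℕ, g k z := by
    intro z
    rw [phi, ← tsum_const_smul'' z]
    refine tsum_congr fun k => ?_
    rw [smul_pow, smul_smul, smul_smul, hgdef]
    congr 1
    rw [pow_succ]
    ring
  have eq_exp : ∀ y : ℝ, NormedSpace.exp (y • T)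
      = ∑' k : ℕ, (y ^ k * ((k ! : ℝ))⁻¹) • T ^ k := by
    intro y
    rw [NormedSpace.exp_eq_tsum ℝ]
    refine tsum_congr fun k => ?_
    rw [smul_pow, smul_smul]
    congr 1
    ring
  have key : ∀ y ∈ Set.uIcc (0:ℝ) τ, HasDerivAt (fun z : ℝ => z • phi 1 (z • T))
      (NormedSpace.exp (y • T)) y := by
    intro y hy
    have hmem : y ∈ Set.Ioo (-(|τ| + 1)) (|τ| + 1) := by
      rcases Set.mem_uIcc.mp hy with h | h <;> constructor <;>
        nlinarith [abs_nonneg τ, le_abs_self τ, neg_abs_le τ]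
    have hD : HasDerivAt (fun z : ℝ => ∑' k : ℕ, g k z)
        (∑' k : ℕ, (y ^ k * ((k ! : ℝ))⁻¹) • T ^ k) y := by
      refine hasDerivAt_tsum_of_isPreconnected
        (u := fun k : ℕ => ((|τ| + 1) * ‖T‖) ^ k * ((k ! : ℝ))⁻¹)
        ?_ isOpen_Ioo (convex_Ioo _ _).isPreconnected
        (g' := fun k z => (z ^ k * ((k ! : ℝ))⁻¹) • T ^ k) (y₀ := 0)
        (fun k z _ => ?_) (fun k z hz => ?_) ?_ ?_ hmem
      · have := Real.summable_pow_div_factorial ((|τ| + 1) * ‖T‖)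
        simpa [div_eq_mul_inv] using this
      · -- derivative of each term
        have h1 : HasDerivAt (fun z : ℝ => z ^ (k + 1) * ((1 + k)! : ℝ)⁻¹)
            (z ^ k * (k ! : ℝ)⁻¹) z := by
          have h2 := (hasDerivAt_pow (k + 1) z).mul_const ((((1 + k)! : ℝ))⁻¹)
          refine h2.congr_deriv ?_
          have h3 : ((1 + k)! : ℝ) = (k + 1) * (k ! : ℝ) := by
            rw [Nat.add_comm 1 k, Nat.factorial_succ]; push_cast; ring
          rw [h3, Nat.add_sub_cancel]
          have h4 : (k ! : ℝ) ≠ 0 := Nat.cast_ne_zero.mpr (Nat.factorial_ne_zero k)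
          field_simp
          push_cast
          ring
        exact h1.smul_const (T ^ k)
      · -- bound
        have hz' : |z| ≤ |τ| + 1 := by
          rcases hz with ⟨h1, h2⟩
          rw [abs_le]; constructor <;> linarith
        show ‖(z ^ k * ((k ! : ℝ))⁻¹) • T ^ k‖ ≤ ((|τ| + 1) * ‖T‖) ^ k * ((k ! : ℝ))⁻¹
        have hTk := stmt14_norm_pow_le T k
        have h5 : |z| ^ k ≤ (|τ| + 1) ^ k := pow_le_pow_left₀ (abs_nonneg z) hz' k
        have h6 : (0:ℝ) < ((k ! : ℝ))⁻¹ := by positivity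
        have hns : ‖(z ^ k * ((k ! : ℝ))⁻¹) • T ^ k‖
            ≤ |z| ^ k * ((k ! : ℝ))⁻¹ * ‖T ^ k‖ := by
          have h7 := norm_smul_le (z ^ k * ((k ! : ℝ))⁻¹) (T ^ k)
          have h8 : ‖z ^ k * ((k ! : ℝ))⁻¹‖ = |z| ^ k * ((k ! : ℝ))⁻¹ := by
            rw [Real.norm_eq_abs, abs_mul, abs_pow, abs_of_nonneg h6.le]
          rw [h8] at h7
          exact h7
        rw [mul_pow]
        refine le_trans hns ?_
        calc |z| ^ k * ((k ! : ℝ))⁻¹ * ‖T ^ k‖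
            ≤ (|τ| + 1) ^ k * ((k ! : ℝ))⁻¹ * ‖T‖ ^ k := by gcongr
          _ = (|τ| + 1) ^ k * ‖T‖ ^ k * ((k ! : ℝ))⁻¹ := by ring
      · exact Set.mem_Ioo.mpr ⟨by nlinarith [abs_nonneg τ], by nlinarith [abs_nonneg τ]⟩
      · -- summable at 0
        have : (fun k : ℕ => g k 0) = fun _ => (0 : X →L[ℝ] X) := by
          funext k
          simp [hgdef, zero_pow (Nat.succ_ne_zero k)]
        rw [this]
        exact summable_zero
    rw [eq_exp y]
    exact (funext eq_fun : (fun z : ℝ => z • phi 1 (z • T)) = _) ▸ hD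
  rw [integral_eq_sub_of_hasDerivAt key ((stmt14_exp_cont T).intervalIntegrable 0 τ)]
  simp


lemma stmt14_inner_int (A : X →L[ℝ] X) (τ s σ : ℝ) :
    (∫ ξ in s..σ, (NormedSpace.exp ((τ - ξ) • A)).comp A)
      = NormedSpace.exp ((τ - s) • A) - NormedSpace.exp ((τ - σ) • A) := by
  have hd : ∀ ξ : ℝ, HasDerivAt (fun x : ℝ => -(NormedSpace.exp ((τ - x) • A)))
      ((NormedSpace.exp ((τ - ξ) • A)).comp A) ξ := by
    intro ξ
    have h1 := hasDerivAt_exp_smul_const (𝕂 := ℝ) A (τ - ξ)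
    have h2 : HasDerivAt (fun x : ℝ => τ - x) (-1) ξ := by
      simpa using (hasDerivAt_id ξ).const_sub τ
    have h3 := h1.scomp ξ h2
    have h4 := h3.neg
    refine h4.congr_deriv ?_
    simp [ContinuousLinearMap.mul_def]
  have hcont : Continuous fun ξ : ℝ => (NormedSpace.exp ((τ - ξ) • A)).comp A :=
    Continuous.clm_comp
      ((stmt14_exp_cont A).comp (continuous_const.sub continuous_id)) continuous_const
  rw [integral_eq_sub_of_hasDerivAt (fun ξ _ => hd ξ) (hcont.intervalIntegrable s σ)]
  abel

lemma stmt14_phi_commute {S T : X →L[ℝ] X} (h : Commute S T) (ℓ m : ℕ) :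
    Commute (phi ℓ S) (phi m T) := by
  unfold phi
  refine Commute.tsum_left _ fun i => Commute.tsum_right _ fun j => ?_
  exact ((h.pow_pow i j).smul_left _).smul_right _

end Aux

theorem stmt14 {X : Type*} [NormedAddCommGroup X] [NormedSpace ℝ X] [CompleteSpace X]
    (A B : X →L[ℝ] X) (hcomm : A.comp B = B.comp A) (τ : ℝ) (hτ : 0 < τ) :
    τ • phi 1 (τ • (A + B)) - τ • (phi 1 (τ • A)).comp (phi 1 (τ • B)) =
      τ⁻¹ • ∫ s in (0:ℝ)..τ, ∫ σ in (0:ℝ)..τ, ∫ ξ in s..σ,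
        (NormedSpace.exp ((τ - s) • B)).comp
          ((NormedSpace.exp ((τ - ξ) • A)).comp A) := by
  have hC : Commute A B := hcomm
  have hcexp : ∀ (T : X →L[ℝ] X), Continuous fun u : ℝ => NormedSpace.exp ((τ - u) • T) :=
    fun T => (stmt14_exp_cont T).comp (continuous_const.sub continuous_id)
  set IA := τ • phi 1 (τ • A) with hIA
  have hshift : ∀ (T : X →L[ℝ] X),
      (∫ u in (0:ℝ)..τ, NormedSpace.exp ((τ - u) • T)) = τ • phi 1 (τ • T) := by
    intro T
    have h := intervalIntegral.integral_comp_sub_left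
      (a := (0:ℝ)) (b := τ) (fun u : ℝ => NormedSpace.exp (u • T)) τ
    simp only [sub_self, sub_zero] at h
    rw [h, stmt14_integral_exp]
  -- step 1
  have h1 : ∀ s σ : ℝ,
      (∫ ξ in s..σ, (NormedSpace.exp ((τ - s) • B)).comp
          ((NormedSpace.exp ((τ - ξ) • A)).comp A))
        = (NormedSpace.exp ((τ - s) • B)).comp
            (NormedSpace.exp ((τ - s) • A) - NormedSpace.exp ((τ - σ) • A)) := by
    intro s σ
    have hint : IntervalIntegrable
        (fun ξ => (NormedSpace.exp ((τ - ξ) • A)).comp A) volume s σ :=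
      (Continuous.clm_comp (hcexp A) continuous_const).intervalIntegrable s σ
    have hcc := (ContinuousLinearMap.compL ℝ X X X
      (NormedSpace.exp ((τ - s) • B))).intervalIntegral_comp_comm hint
    simp only [ContinuousLinearMap.compL_apply] at hcc
    rw [hcc, stmt14_inner_int A τ s σ]
  -- step 2
  have h2 : ∀ s : ℝ,
      (∫ σ in (0:ℝ)..τ, (NormedSpace.exp ((τ - s) • B)).comp
          (NormedSpace.exp ((τ - s) • A) - NormedSpace.exp ((τ - σ) • A)))
        = τ • ((NormedSpace.exp ((τ - s) • B)).comp (NormedSpace.exp ((τ - s) • A)))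
          - (NormedSpace.exp ((τ - s) • B)).comp IA := by
    intro s
    have hint : IntervalIntegrable (fun σ : ℝ => (NormedSpace.exp ((τ - s) • B)).comp
        (NormedSpace.exp ((τ - σ) • A))) volume 0 τ :=
      (Continuous.clm_comp continuous_const (hcexp A)).intervalIntegrable 0 τ
    have hconst : IntervalIntegrable (fun _ : ℝ => (NormedSpace.exp ((τ - s) • B)).comp
        (NormedSpace.exp ((τ - s) • A))) volume 0 τ := intervalIntegrable_const
    simp_rw [ContinuousLinearMap.comp_sub]
    rw [intervalIntegral.integral_sub hconst hint, intervalIntegral.integral_const]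
    congr 1
    · rw [sub_zero]
    · have hintA : IntervalIntegrable (fun σ : ℝ => NormedSpace.exp ((τ - σ) • A))
        volume 0 τ := (hcexp A).intervalIntegrable 0 τ
      have hcc := (ContinuousLinearMap.compL ℝ X X X
        (NormedSpace.exp ((τ - s) • B))).intervalIntegral_comp_comm hintA
      simp only [ContinuousLinearMap.compL_apply] at hcc
      rw [hcc, hshift A]
  -- exp product
  have hBA : ∀ u : ℝ, (NormedSpace.exp (u • B)).comp (NormedSpace.exp (u • A))
      = NormedSpace.exp (u • (A + B)) := by
    intro u
    have hc : Commute (u • B) (u • A) := (hC.symm.smul_left u).smul_right u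
    calc (NormedSpace.exp (u • B)).comp (NormedSpace.exp (u • A))
        = NormedSpace.exp (u • B) * NormedSpace.exp (u • A) := rfl
      _ = NormedSpace.exp (u • B + u • A) := (NormedSpace.exp_add_of_commute_of_mem_ball (𝕂 := ℝ) hc
          ((NormedSpace.expSeries_radius_eq_top ℝ (X →L[ℝ] X)).symm ▸ edist_lt_top _ _) ((NormedSpace.expSeries_radius_eq_top ℝ (X →L[ℝ] X)).symm ▸ edist_lt_top _ _)).symm
      _ = NormedSpace.exp (u • (A + B)) := by rw [← smul_add, add_comm B A]
  -- step 3
  have h3 : (∫ s in (0:ℝ)..τ,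
        (τ • ((NormedSpace.exp ((τ - s) • B)).comp (NormedSpace.exp ((τ - s) • A)))
          - (NormedSpace.exp ((τ - s) • B)).comp IA))
      = τ • (τ • phi 1 (τ • (A + B))) - (τ • phi 1 (τ • B)).comp IA := by
    have hint1 : IntervalIntegrable (fun s : ℝ =>
        τ • ((NormedSpace.exp ((τ - s) • B)).comp (NormedSpace.exp ((τ - s) • A))))
        volume 0 τ :=
      ((Continuous.clm_comp (hcexp B) (hcexp A)).const_smul τ).intervalIntegrable 0 τ
    have hint2 : IntervalIntegrable (fun s : ℝ =>
        (NormedSpace.exp ((τ - s) • B)).comp IA) volume 0 τ :=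
      (Continuous.clm_comp (hcexp B) continuous_const).intervalIntegrable 0 τ
    rw [intervalIntegral.integral_sub hint1 hint2]
    congr 1
    · simp_rw [hBA]
      rw [intervalIntegral.integral_smul, hshift (A + B)]
    · have hintB : IntervalIntegrable (fun s : ℝ => NormedSpace.exp ((τ - s) • B))
        volume 0 τ := (hcexp B).intervalIntegrable 0 τ
      have hcc := ((ContinuousLinearMap.compL ℝ X X X).flip IA).intervalIntegral_comp_comm hintB
      simp only [ContinuousLinearMap.flip_apply, ContinuousLinearMap.compL_apply] at hcc
      rw [hcc, hshift B]
  -- assemble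
  have hR : (∫ s in (0:ℝ)..τ, ∫ σ in (0:ℝ)..τ, ∫ ξ in s..σ,
        (NormedSpace.exp ((τ - s) • B)).comp
          ((NormedSpace.exp ((τ - ξ) • A)).comp A))
      = τ • (τ • phi 1 (τ • (A + B))) - (τ • phi 1 (τ • B)).comp IA := by
    simp_rw [h1, h2]
    exact h3
  rw [hR, hIA]
  have hcomm' : (phi 1 (τ • A)).comp (phi 1 (τ • B)) = (phi 1 (τ • B)).comp (phi 1 (τ • A)) :=
    stmt14_phi_commute ((hC.smul_left τ).smul_right τ) 1 1
  rw [ContinuousLinearMap.smul_comp, ContinuousLinearMap.comp_smul, ← hcomm']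
  rw [smul_sub, smul_smul, smul_smul, smul_smul, smul_smul]
  have hs : τ⁻¹ * τ * τ = τ := by field_simp
  rw [hs]
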